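/- Main theorem, necessity direction: if in the graph G^big there exist two individuals of the same agent type lying in the same strongly connected component but receiving different house types (μ(a) ≠ μ(b)), then for every strict type-preference profile ≿, the allocation μ is not in the strong core (there exists a blocking coalition, possibly a singleton violating individual rationality). -/

import Mathlib

/-- Arc of the allocation graph G^big: `(a,b)` is an arc iff `μ a = μE b`. -/
def arcBig {A H : Type*} (μE μ : A → H) (a b : A) : Prop := μ a = μE b

/-- Two agents lie in the same strongly connected component of G^big. -/
def sameSCC {A H : Type*} (μE μ : A → H) (a b : A) : Prop :=
  Relation.ReflTransGen (arcBig μE μ) a b ∧ Relation.ReflTransGen (arcBig μE μ) b a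

/-- For each house type, the number of agents allocated it equals the number endowed with it. -/
def BalancedAlloc {A H : Type*} (μE μ : A → H) : Prop :=
  ∀ h : H, Nat.card {a : A // μ a = h} = Nat.card {a : A // μE a = h}

/-- A directed cycle: a nonempty list of distinct vertices with consecutive arcs,
and an arc from the last vertex back to the first. A single vertex with a
self-loop is a cycle of length 1. -/
def IsCycle {V : Type*} (R : V → V → Prop) (l : List V) : Prop :=
  l ≠ [] ∧ l.Nodup ∧ l.Chain' R ∧ ∀ h : l ≠ [], R (l.getLast h) (l.head h)

/-- A blocking coalition: a nonempty coalition `C` and a reallocation `μ'` of its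
own endowments (as multisets) making every member weakly better off and at least
one member strictly better off, w.r.t. the strict type-preference profile `P`. -/
def Blocking {A H T : Type*} (tp : A → T) (μE μ : A → H)
    (P : T → LinearOrder H) : Prop :=
  ∃ (C : Finset A) (μ' : A → H),
    C.Nonempty ∧
    C.val.map μ' = C.val.map μE ∧
    (∀ a ∈ C, (P (tp a)).le (μ a) (μ' a)) ∧
    (∃ a ∈ C, (P (tp a)).lt (μ a) (μ' a))

/-- The allocation `μ` is rationalizable: some strict type-preference profile places
it in the strong core (no blocking coalition). -/
def Rationalizable {A H T : Type*} (tp : A → T) (μE μ : A → H) : Prop :=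
  ∃ P : T → LinearOrder H, ¬ Blocking tp μE μ P

section auxx
variable {α : Type*} {r : α → α → Prop}

lemma exists_nodup_chain {u v : α} (h : Relation.ReflTransGen r u v) :
    ∃ l : List α, List.Chain r u l ∧ (u :: l).getLast (List.cons_ne_nil _ _) = v ∧
      (u :: l).Nodup := by
  induction h using Relation.ReflTransGen.head_induction_on with
  | refl => exact ⟨[], List.Chain.nil, rfl, List.nodup_singleton _⟩
  | head hux hxv ih =>
    rename_i u x
    obtain ⟨l, hchain, hlast, hnd⟩ := ih
    by_cases hu : u ∈ x :: l
    · obtain ⟨s, t, hst⟩ := List.append_of_mem hu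
      refine ⟨t, ?_, ?_, ?_⟩
      · have : List.Chain' r (s ++ u :: t) := by rw [← hst]; exact hchain
        exact this.right_of_append
      · have h1 : (u :: t).getLast (List.cons_ne_nil _ _)
            = (s ++ u :: t).getLast (by simp) := by
          rw [List.getLast_append]
          simp
        rw [h1]
        convert hlast using 2
        exact hst.symm
      · have hsub : (u :: t).Sublist (x :: l) := by
          rw [hst]; exact List.sublist_append_right s (u :: t)
        exact hnd.sublist hsub
    · exact ⟨x :: l, hchain.cons hux, by rw [List.getLast_cons]; exact hlast, hnd.cons hu⟩
end auxx

lemma rot_list {A H : Type*} (μE μ : A → H) (v : A) :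
    ∀ (w : List A) (hw : w ≠ []), w.Chain' (arcBig μE μ) →
      μ (w.getLast hw) = μE v →
      μE (w.head hw) :: w.map μ = w.map μE ++ [μE v] := by
  intro w
  induction w with
  | nil => simp
  | cons x w ih =>
    intro _ hch hlast
    cases w with
    | nil => simp_all [arcBig]
    | cons y w =>
      have harc : arcBig μE μ x y := (List.isChain_cons_cons.mp hch).1
      have hch' := (List.isChain_cons_cons.mp hch).2
      have hlast' : μ ((y :: w).getLast (List.cons_ne_nil _ _)) = μE v := hlast
      have := ih (List.cons_ne_nil _ _) hch' hlast'
      simp only [List.map_cons, List.head_cons] at this ⊢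
      rw [List.cons_append, ← this, harc]

lemma block_aux {A H T : Type*} [DecidableEq A] (tp : A → T) (μE μ : A → H)
    (P : T → LinearOrder H) {u v : A}
    (huv : Relation.ReflTransGen (arcBig μE μ) u v)
    (hlt : (P (tp v)).lt (μ v) (μ u)) :
    Blocking tp μE μ P := by
  obtain ⟨l, hchain, hlast, hnd⟩ := exists_nodup_chain huv
  have hne : u ≠ v := by
    intro h
    rw [h] at hlt
    exact absurd hlt (@lt_irrefl H (P (tp v)).toPartialOrder.toPreorder (μ v))
  have hlne : l ≠ [] := by
    rintro rfl; exact hne (by simpa using hlast)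
  -- l = w ++ [v]
  obtain ⟨w, hw⟩ : ∃ w, l = w ++ [v] := by
    refine ⟨l.dropLast, ?_⟩
    have : l.getLast hlne = v := by
      rw [← hlast, List.getLast_cons hlne]
    conv_lhs => rw [← List.dropLast_append_getLast hlne, this]
  subst hw
  -- first arc: μ u = μE (head of w++[v])
  have hfirst : μ u = μE ((w ++ [v]).head (by simp)) := by
    cases w with
    | nil => exact (List.chain_cons.mp hchain).1
    | cons x w' => exact (List.chain_cons.mp hchain).1
  have hndl : (w ++ [v]).Nodup := hnd.of_cons
  have hvw : v ∉ w := by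
    intro hv
    have := List.nodup_append'.mp hndl
    exact this.2.2 hv (by simp)
  cases w with
  | nil =>
    -- singleton coalition {v}, μ' = μE
    refine ⟨{v}, μE, ⟨v, by simp⟩, rfl, ?_, ⟨v, by simp, ?_⟩⟩
    · intro a ha
      simp only [Finset.mem_singleton] at ha
      subst ha
      exact @le_of_lt H (P (tp a)).toPartialOrder.toPreorder _ _ (by simpa using hfirst ▸ hlt)
    · simpa using hfirst ▸ hlt
  | cons d w' =>
    set w := d :: w' with hwdef
    have hwne : w ≠ [] := by simp [hwdef]
    have hchain0 : List.Chain' (arcBig μE μ) (u :: (w ++ [v])) := hchain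
    have hchain' : (w ++ [v]).Chain' (arcBig μE μ) := hchain0.tail
    have hchw : w.Chain' (arcBig μE μ) := (List.isChain_append.mp hchain').1
    have hjunc : μ (w.getLast hwne) = μE v := by
      have := (List.isChain_append.mp hchain').2.2
      have h := this (w.getLast hwne) (by simp [List.getLast?_eq_getLast hwne]) v (by simp)
      exact h
    have hhead : (w ++ [v]).head (by simp) = w.head hwne := by
      simp [hwdef]
    rw [hhead] at hfirst
    have hrot := rot_list μE μ v w hwne hchw hjunc
    -- coalition
    refine ⟨(v :: w).toFinset, Function.update μ v (μE (w.head hwne)), ⟨v, by simp⟩, ?_, ?_, ?_⟩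
    · -- multiset equality
      have hndvw : (v :: w).Nodup := by
        refine List.nodup_cons.mpr ⟨hvw, ?_⟩
        exact (List.nodup_append'.mp hndl).1
      have hval : ((v :: w).toFinset).val = ((v :: w : List A) : Multiset A) := by
        rw [List.toFinset_val, hndvw.dedup]
      rw [hval]
      show ((v :: w).map (Function.update μ v (μE (w.head hwne))) : Multiset H)
        = ((v :: w).map μE : Multiset H)
      rw [Multiset.coe_eq_coe]
      have hmap : (v :: w).map (Function.update μ v (μE (w.head hwne)))
          = μE (w.head hwne) :: w.map μ := by
        simp only [List.map_cons, Function.update_self]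
        congr 1
        apply List.map_congr_left
        intro x hx
        exact Function.update_of_ne (fun h => hvw (by rw [← h]; exact hx)) _ _
      rw [hmap, hrot]
      simpa using List.perm_append_singleton (μE v) (w.map μE)
    · intro a ha
      simp only [List.mem_toFinset, List.mem_cons] at ha
      rcases ha with rfl | ha
      · rw [Function.update_self]
        exact @le_of_lt H (P (tp a)).toPartialOrder.toPreorder _ _ (hfirst ▸ hlt)
      · rw [Function.update_of_ne (fun h => hvw (by rw [← h]; exact ha))]
        exact @le_refl H (P (tp a)).toPartialOrder.toPreorder _
    · exact ⟨v, by simp, by rw [Function.update_self]; exact hfirst ▸ hlt⟩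

/-- necessity: if two same-type agents in the same SCC of G^big receive
different house types, then for every strict type-preference profile there is a
blocking coalition, i.e. μ is never in the strong core. -/
theorem stmt9 {A H T : Type*} [Fintype A] [Fintype H] (tp : A → T)
    (μE μ : A → H) (hbal : BalancedAlloc μE μ)
    (hviol : ∃ a b : A, tp a = tp b ∧ sameSCC μE μ a b ∧ μ a ≠ μ b) :
    ∀ P : T → LinearOrder H, Blocking tp μE μ P := by
  classical
  intro P
  obtain ⟨a, b, htp, ⟨hab, hba⟩, hne⟩ := hviol
  letI : LinearOrder H := P (tp b)
  rcases hne.lt_or_gt with h | h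
  · -- μ a < μ b : a is worse off, path from b to a
    have hlt : (P (tp a)).lt (μ a) (μ b) := by rw [htp]; exact h
    exact block_aux tp μE μ P hba hlt
  · -- μ b < μ a : b is worse off, path from a to b
    exact block_aux tp μE μ P hab h
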